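/- Let p_S denote the number of permutations in S_{n+1} with peak set S. Then the vector (p_S) indexed by left sparse S ⊆ [n] is an eigenvector with eigenvalue 2^{n+1} of the linear map whose matrix entries are 2^{|S|+1} η_{T,S}: that is, for every left sparse T ⊆ [n], Σ_{S left sparse} 2^{|S|+1} η_{T,S} p_S = 2^{n+1} p_T, where η_{T,S} = #{R ⊆ [n] : R, [n]\R ∈ b[I^S], Λ(R) = T}. -/

import Mathlib

/-- `S ⊆ [n]` is left sparse if `1 ∉ S` and `i ∈ S` implies `i-1 ∉ S`. -/
def LeftSparse (n : ℕ) (S : Finset ℕ) : Prop :=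
  S ⊆ Finset.Icc 1 n ∧ 1 ∉ S ∧ ∀ i ∈ S, i - 1 ∉ S

instance (n : ℕ) : DecidablePred (LeftSparse n) := fun _ => by
  unfold LeftSparse; infer_instance

/-- `R ∈ b[I^S]` for left sparse `S`: `R` meets every pair `{i-1, i}`, `i ∈ S`. -/
def blocksS (S R : Finset ℕ) : Prop := ∀ i ∈ S, i - 1 ∈ R ∨ i ∈ R

instance (S R : Finset ℕ) : Decidable (blocksS S R) := by
  unfold blocksS; infer_instance

/-- `Λ(R) = {i ∈ R : i ≠ 1, i-1 ∉ R}`. -/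
def Lam (R : Finset ℕ) : Finset ℕ := R.filter (fun i => i ≠ 1 ∧ i - 1 ∉ R)

/-- `η_{T,S} = #{R ⊆ [n] : R, [n]\R ∈ b[I^S], Λ(R) = T}`. -/
def eta (n : ℕ) (T S : Finset ℕ) : ℕ :=
  ((Finset.Icc 1 n).powerset.filter
    (fun R => blocksS S R ∧ blocksS S (Finset.Icc 1 n \ R) ∧ Lam R = T)).card

/-- The peak set of a permutation `π` of `{1,…,n+1}` (written on `Fin (n+1)`,
position `i ∈ {1,…,n+1}` corresponding to `i - 1 : Fin (n+1)`):
`{i ∈ {2,…,n} : π(i-1) < π(i) > π(i+1)}`. -/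
def peakSet (n : ℕ) (π : Equiv.Perm (Fin (n + 1))) : Finset ℕ :=
  (Finset.Icc 2 n).filter (fun i => ∃ a b c : Fin (n + 1),
    (a : ℕ) = i - 2 ∧ (b : ℕ) = i - 1 ∧ (c : ℕ) = i ∧ π a < π b ∧ π c < π b)

/-- `p_S`: the number of permutations in `S_{n+1}` with peak set `S`. -/
def pCount (n : ℕ) (S : Finset ℕ) : ℕ :=
  (Finset.univ.filter (fun π : Equiv.Perm (Fin (n + 1)) => peakSet n π = S)).card

namespace S15
open Finset

/-- value at 0-indexed position `j` (as a natural number), junk `0` out of range -/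
def PV (n : ℕ) (π : Equiv.Perm (Fin (n+1))) (j : ℕ) : ℕ :=
  if h : j < n+1 then (π ⟨j, h⟩ : Fin (n+1)) else 0

/-- descent at pair `i ∈ [1,n]` (between 0-indexed positions `i-1` and `i`) -/
def dsc (n : ℕ) (π : Equiv.Perm (Fin (n+1))) (i : ℕ) : Prop := PV n π i < PV n π (i-1)

instance (n π i) : Decidable (dsc n π i) := by unfold dsc; infer_instance

/-- descent set -/
def desF (n : ℕ) (π : Equiv.Perm (Fin (n+1))) : Finset ℕ := (Icc 1 n).filter (dsc n π)

lemma PV_inj {n : ℕ} (π : Equiv.Perm (Fin (n+1))) {j k : ℕ} (hj : j < n+1) (hk : k < n+1)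
    (h : PV n π j = PV n π k) : j = k := by
  unfold PV at h
  rw [dif_pos hj, dif_pos hk] at h
  have := π.injective (Fin.val_injective h)
  simpa using congrArg Fin.val this

lemma peakSet_mem {n : ℕ} (π : Equiv.Perm (Fin (n+1))) (i : ℕ) :
    i ∈ peakSet n π ↔ i ∈ Icc 2 n ∧ PV n π (i-2) < PV n π (i-1) ∧ PV n π i < PV n π (i-1) := by
  unfold peakSet
  rw [mem_filter]
  constructor
  · rintro ⟨hi, a, b, c, ha, hb, hc, h1, h2⟩
    rw [mem_Icc] at hi
    have hia : i - 2 < n + 1 := by omega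
    have hib : i - 1 < n + 1 := by omega
    have hic : i < n + 1 := by omega
    have ea : a = ⟨i-2, hia⟩ := by apply Fin.ext; simpa using ha
    have eb : b = ⟨i-1, hib⟩ := by apply Fin.ext; simpa using hb
    have ec : c = ⟨i, hic⟩ := by apply Fin.ext; simpa using hc
    subst ea; subst eb; subst ec
    refine ⟨by rw [mem_Icc]; omega, ?_, ?_⟩ <;>
      simp only [PV, dif_pos hia, dif_pos hib, dif_pos hic] <;>
      [exact h1; exact h2]
  · rintro ⟨hi, h1, h2⟩
    rw [mem_Icc] at hi
    have hia : i - 2 < n + 1 := by omega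
    have hib : i - 1 < n + 1 := by omega
    have hic : i < n + 1 := by omega
    refine ⟨by rw [mem_Icc]; omega, ⟨i-2, hia⟩, ⟨i-1, hib⟩, ⟨i, hic⟩, rfl, rfl, rfl, ?_, ?_⟩ <;>
      simp only [PV, dif_pos hia, dif_pos hib, dif_pos hic] at h1 h2 <;>
      [exact h1; exact h2]

lemma peakSet_eq_filter {n : ℕ} (π : Equiv.Perm (Fin (n+1))) :
    peakSet n π = (Icc 2 n).filter (fun i => ¬ dsc n π (i-1) ∧ dsc n π i) := by
  ext i
  rw [peakSet_mem, mem_filter]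
  constructor
  · rintro ⟨hi, h1, h2⟩
    rw [mem_Icc] at hi
    refine ⟨by rw [mem_Icc]; omega, ?_, h2⟩
    unfold dsc
    have : (i-1) - 1 = i - 2 := by omega
    rw [this]; omega
  · rintro ⟨hi, h1, h2⟩
    rw [mem_Icc] at hi
    unfold dsc at h1 h2
    have e : (i-1) - 1 = i - 2 := by omega
    rw [e] at h1
    push_neg at h1
    refine ⟨by rw [mem_Icc]; omega, lt_of_le_of_ne h1 ?_, h2⟩
    intro h
    have := PV_inj π (by omega : i - 2 < n+1) (by omega : i - 1 < n+1) h
    omega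

lemma peakSet_eq_Lam_desF {n : ℕ} (π : Equiv.Perm (Fin (n+1))) :
    peakSet n π = Lam (desF n π) := by
  rw [peakSet_eq_filter]
  unfold Lam desF
  ext i
  simp only [mem_filter, mem_Icc]
  constructor
  · rintro ⟨⟨h2, hn⟩, ha, hd⟩
    refine ⟨⟨⟨by omega, hn⟩, hd⟩, by omega, ?_⟩
    rintro ⟨-, hda⟩; exact ha hda
  · rintro ⟨⟨⟨h1, hn⟩, hd⟩, hne, hnd⟩
    have h2 : 2 ≤ i := by omega
    refine ⟨⟨h2, hn⟩, ?_, hd⟩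
    intro hda
    exact hnd ⟨⟨by omega, by omega⟩, hda⟩

lemma desF_subset {n : ℕ} (π : Equiv.Perm (Fin (n+1))) : desF n π ⊆ Icc 1 n :=
  filter_subset _ _

lemma leftSparse_Lam {n : ℕ} {R : Finset ℕ} (hR : R ⊆ Icc 1 n) : LeftSparse n (Lam R) := by
  refine ⟨fun i hi => hR (mem_filter.1 hi).1, ?_, ?_⟩
  · intro h; exact (mem_filter.1 h).2.1 rfl
  · intro i hi hi1
    have h1 := (mem_filter.1 hi).2.2
    exact h1 (mem_filter.1 hi1).1

lemma peakSet_subset {n : ℕ} (π : Equiv.Perm (Fin (n+1))) : peakSet n π ⊆ Icc 2 n := by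
  rw [peakSet_eq_filter]; exact filter_subset _ _

end S15

namespace S15
open Finset

/-- compatibility rule between signs `a` (at position i-1), `b` (at position i),
and descent `di` at the pair `i` -/
def rule (a b di : Prop) : Prop := (a → b) ∧ (¬a ∧ ¬b → di) ∧ (a ∧ b → ¬di)

instance {a b di : Prop} [Decidable a] [Decidable b] [Decidable di] : Decidable (rule a b di) := by
  unfold rule; infer_instance

lemma rule_congr {a a' b b' c : Prop} (ha : a ↔ a') (hb : b ↔ b') :
    rule a b c ↔ rule a' b' c := by unfold rule; rw [ha, hb]

def Cmpt (n : ℕ) (E : Finset ℕ) (d : ℕ → Prop) (V : Finset ℕ) : Prop :=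
  ∀ i ∈ Icc 1 n, i ∉ E → rule ((i-1) ∈ V) (i ∈ V) (d i)

instance {n E d V} [DecidablePred d] : Decidable (Cmpt n E d V) := by
  unfold Cmpt; infer_instance

def blc (n : ℕ) (E : Finset ℕ) (d : ℕ → Prop) : Prop :=
  ∀ i ∈ Icc 2 n, ¬ d (i-1) → d i → ((i-1) ∈ E ∨ i ∈ E)

instance {n E d} [DecidablePred d] : Decidable (blc n E d) := by
  unfold blc; infer_instance

def tf (n : ℕ) (E : Finset ℕ) (i : ℕ) : Prop := ∀ j ∈ Icc i n, j ∉ E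

instance {n E i} : Decidable (tf n E i) := by unfold tf; infer_instance

def ad (n : ℕ) (E : Finset ℕ) (d : ℕ → Prop) : Prop := ∀ i ∈ Icc 1 n, tf n E i → d i

instance {n E d} [DecidablePred d] : Decidable (ad n E d) := by
  unfold ad; infer_instance

def cnt (n : ℕ) (E : Finset ℕ) (d : ℕ → Prop) [DecidablePred d] (b : Bool) : ℕ :=
  (((range (n+1)).powerset).filter (fun V => Cmpt n E d V ∧ (n ∈ V ↔ b = true))).card

lemma cmpt_erase {n : ℕ} {E' : Finset ℕ} {d : ℕ → Prop} {V : Finset ℕ} :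
    Cmpt n E' d (V.erase (n+1)) ↔ Cmpt n E' d V := by
  unfold Cmpt
  refine forall_congr' fun i => forall_congr' fun hi => forall_congr' fun hE => ?_
  rw [mem_Icc] at hi
  have h1 : i - 1 ≠ n+1 := by omega
  have h2 : i ≠ n+1 := by omega
  exact rule_congr (by simp [mem_erase, h1]) (by simp [mem_erase, h2])

lemma rule_FF {c : Prop} : rule False False c ↔ c := by unfold rule; tauto
lemma rule_FT {c : Prop} : rule False True c ↔ True := by unfold rule; tauto
lemma rule_TF {c : Prop} : rule True False c ↔ False := by unfold rule; tauto
lemma rule_TT {c : Prop} : rule True True c ↔ ¬ c := by unfold rule; tauto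

lemma cmpt_succ {n : ℕ} {E : Finset ℕ} {d : ℕ → Prop} {V : Finset ℕ} :
    Cmpt (n+1) E d V ↔
      (Cmpt n (E.erase (n+1)) d V ∧ (n+1 ∉ E → rule (n ∈ V) ((n+1) ∈ V) (d (n+1)))) := by
  constructor
  · intro h
    constructor
    · intro i hi hiE
      rw [mem_Icc] at hi
      refine h i (by rw [mem_Icc]; omega) ?_
      intro hmem
      exact hiE (mem_erase.2 ⟨by omega, hmem⟩)
    · intro hnE
      have := h (n+1) (by rw [mem_Icc]; omega) hnE
      simpa using this
  · rintro ⟨h1, h2⟩ i hi hiE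
    rw [mem_Icc] at hi
    rcases Nat.lt_or_ge i (n+1) with hlt | hge
    · exact h1 i (by rw [mem_Icc]; omega) (fun hmem => hiE (mem_of_mem_erase hmem))
    · have : i = n+1 := by omega
      subst this
      simpa using h2 hiE

lemma cnt_succ (n : ℕ) (E : Finset ℕ) (d : ℕ → Prop) [DecidablePred d] (b : Bool) :
    cnt (n+1) E d b =
      (if (n+1 ∈ E) ∨ rule True (b = true) (d (n+1)) then cnt n (E.erase (n+1)) d true else 0) +
      (if (n+1 ∈ E) ∨ rule False (b = true) (d (n+1)) then cnt n (E.erase (n+1)) d false else 0) := by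
  classical
  have key : ∀ a : Bool,
      (((range (n+2)).powerset).filter
        (fun V => (Cmpt (n+1) E d V ∧ ((n+1) ∈ V ↔ b = true)) ∧ ((n ∈ V) ↔ a = true))).card =
      if (n+1 ∈ E) ∨ rule (a = true) (b = true) (d (n+1)) then cnt n (E.erase (n+1)) d a else 0 := by
    intro a
    by_cases hok : (n+1 ∈ E) ∨ rule (a = true) (b = true) (d (n+1))
    · rw [if_pos hok]
      unfold cnt
      refine Finset.card_bij' (fun V _ => V.erase (n+1))
        (fun W _ => if b then insert (n+1) W else W) ?hi ?hj ?left ?right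
      case hi =>
        rintro V hV
        rw [mem_filter, mem_powerset] at hV
        obtain ⟨hVsub, ⟨hC, hb⟩, ha⟩ := hV
        rw [mem_filter, mem_powerset]
        refine ⟨?_, ?_, ?_⟩
        · intro x hx
          rw [mem_erase] at hx
          have := hVsub hx.2
          rw [mem_range] at this ⊢
          omega
        · exact cmpt_erase.2 (cmpt_succ.1 hC).1
        · rw [mem_erase]
          constructor
          · rintro ⟨-, h⟩; exact ha.1 h
          · intro h; exact ⟨by omega, ha.2 h⟩
      case hj =>
        rintro W hW
        rw [mem_filter, mem_powerset] at hW
        obtain ⟨hWsub, hC, haW⟩ := hW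
        have hWn1 : (n+1) ∉ W := fun h => by have := hWsub h; rw [mem_range] at this; omega
        have hmem1 : ∀ x, x ≤ n → (x ∈ (if b then insert (n+1) W else W) ↔ x ∈ W) := by
          intro x hx
          cases b <;> simp [mem_insert] <;> omega
        rw [mem_filter, mem_powerset]
        refine ⟨?_, ⟨?_, ?_⟩, ?_⟩
        · intro x hx
          have : x ∈ insert (n+1) W ∨ x ∈ W := by
            cases b <;> simp_all [mem_insert] <;> tauto
          rw [mem_range]
          rcases this with h | h
          · rcases mem_insert.1 h with h | h
            · omega
            · have := hWsub h; rw [mem_range] at this; omega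
          · have := hWsub h; rw [mem_range] at this; omega
        · -- Cmpt (n+1)
          rw [cmpt_succ]
          constructor
          · intro i hi hiE
            rw [mem_Icc] at hi
            have e1 := hmem1 (i-1) (by omega)
            have e2 := hmem1 i (by omega)
            exact (rule_congr e1 e2).2 (hC i (by rw [mem_Icc]; omega) hiE)
          · intro hnE
            have hok' : rule (a = true) (b = true) (d (n+1)) := by tauto
            have e1 : (n ∈ (if b then insert (n+1) W else W)) ↔ (a = true) := by
              rw [hmem1 n (le_refl n)]; exact haW
            have e2 : ((n+1) ∈ (if b then insert (n+1) W else W)) ↔ (b = true) := by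
              cases b <;> simp [mem_insert, hWn1]
            exact (rule_congr e1 e2).2 hok'
        · cases b <;> simp [mem_insert, hWn1]
        · rw [hmem1 n (le_refl n)]; exact haW
      case left =>
        rintro V hV
        rw [mem_filter] at hV
        obtain ⟨-, ⟨-, hb⟩, -⟩ := hV
        by_cases hb2 : (n+1) ∈ V
        · rw [if_pos (hb.1 hb2)]
          exact insert_erase hb2
        · rw [if_neg (fun h => hb2 (hb.2 h))]
          exact erase_eq_of_notMem hb2
      case right =>
        rintro W hW
        rw [mem_filter, mem_powerset] at hW
        have hWn1 : (n+1) ∉ W := fun h => by have := hW.1 h; rw [mem_range] at this; omega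
        by_cases hbb : b = true
        · rw [if_pos hbb]
          exact erase_insert hWn1
        · rw [if_neg hbb]
          exact erase_eq_of_notMem hWn1
    · rw [if_neg hok]
      push_neg at hok
      rw [Finset.card_eq_zero, Finset.filter_eq_empty_iff]
      rintro V hV ⟨⟨hC, hb⟩, ha⟩
      apply hok.2
      have := hC (n+1) (by rw [mem_Icc]; omega) hok.1
      have e : (n+1) - 1 = n := by omega
      rw [e] at this
      exact (rule_congr ha hb).1 this
  have hcnt : cnt (n+1) E d b = (((range (n+1+1)).powerset).filter
      (fun V => Cmpt (n+1) E d V ∧ ((n+1) ∈ V ↔ b = true))).card := rfl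
  rw [hcnt, ← card_filter_add_card_filter_not (p := fun V => n ∈ V), filter_filter,
    filter_filter]
  have e1 : (((range (n+1+1)).powerset).filter
      (fun V => (Cmpt (n+1) E d V ∧ ((n+1) ∈ V ↔ b = true)) ∧ n ∈ V)).card =
      (((range (n+2)).powerset).filter
      (fun V => (Cmpt (n+1) E d V ∧ ((n+1) ∈ V ↔ b = true)) ∧ ((n ∈ V) ↔ (true : Bool) = true))).card := by
    congr 1
    apply filter_congr
    intro V _
    simp
  have e2 : (((range (n+1+1)).powerset).filter
      (fun V => (Cmpt (n+1) E d V ∧ ((n+1) ∈ V ↔ b = true)) ∧ ¬ (n ∈ V))).card =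
      (((range (n+2)).powerset).filter
      (fun V => (Cmpt (n+1) E d V ∧ ((n+1) ∈ V ↔ b = true)) ∧ ((n ∈ V) ↔ (false : Bool) = true))).card := by
    congr 1
    apply filter_congr
    intro V _
    simp
  rw [e1, e2, key true, key false]
  simp

lemma blc_of_succ {n : ℕ} {E : Finset ℕ} {d : ℕ → Prop} (h : blc (n+1) E d) : blc n E d := by
  intro i hi
  rw [mem_Icc] at hi
  exact h i (by rw [mem_Icc]; omega)

lemma blc_succ_of_ad {n : ℕ} {E : Finset ℕ} {d : ℕ → Prop}
    (hb : blc n E d) (ha : ad n E d) : blc (n+1) E d := by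
  intro i hi hd1 hd2
  rw [mem_Icc] at hi
  rcases Nat.lt_or_ge i (n+1) with hlt | hge
  · exact hb i (by rw [mem_Icc]; omega) hd1 hd2
  · have hie : i = n+1 := by omega
    subst hie
    have hn1 : (n+1) - 1 = n := by omega
    rw [hn1] at hd1 ⊢
    by_cases hnE : n ∈ E
    · exact Or.inl hnE
    · exfalso
      apply hd1
      apply ha n (by rw [mem_Icc]; omega)
      intro j hj
      rw [mem_Icc] at hj
      have : j = n := by omega
      subst this; exact hnE

lemma ad_succ_of_blc {n : ℕ} {E : Finset ℕ} {d : ℕ → Prop}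
    (hnE : n+1 ∉ E) (hb : blc (n+1) E d) (hd : d (n+1)) : ad n E d := by
  classical
  by_contra hcon
  unfold ad at hcon
  push_neg at hcon
  obtain ⟨i₀, hi₀, htf₀, hd₀⟩ := hcon
  -- the set of bad indices
  set B := (Icc 1 n).filter (fun i => tf n E i ∧ ¬ d i) with hB
  have hne : B.Nonempty := ⟨i₀, by rw [hB, mem_filter]; exact ⟨hi₀, htf₀, hd₀⟩⟩
  set j := B.max' hne with hj
  have hjmem : j ∈ B := B.max'_mem hne
  rw [hB, mem_filter, mem_Icc] at hjmem
  obtain ⟨⟨hj1, hjn⟩, hjtf, hjd⟩ := hjmem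
  have hjE : j ∉ E := hjtf j (by rw [mem_Icc]; omega)
  have hj1E : j + 1 ∉ E := by
    rcases Nat.lt_or_ge j n with hlt | hge
    · exact hjtf (j+1) (by rw [mem_Icc]; omega)
    · have hje : j = n := by omega
      rw [hje]; exact hnE
  have hdj1 : d (j+1) := by
    rcases Nat.lt_or_ge j n with hlt | hge
    · by_contra hnd
      have hmem : j + 1 ∈ B := by
        rw [hB, mem_filter, mem_Icc]
        refine ⟨⟨by omega, by omega⟩, ?_, hnd⟩
        intro t ht
        rw [mem_Icc] at ht
        exact hjtf t (by rw [mem_Icc]; omega)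
      have := B.le_max' _ hmem
      rw [← hj] at this
      omega
    · have hje : j = n := by omega
      rw [hje]; exact hd
  have := hb (j+1) (by rw [mem_Icc]; omega) (by simpa using hjd) hdj1
  simp only [Nat.add_sub_cancel] at this
  tauto

lemma ad_succ_iff {n : ℕ} {E : Finset ℕ} {d : ℕ → Prop} (hnE : n+1 ∉ E) :
    ad (n+1) E d ↔ (ad n E d ∧ d (n+1)) := by
  constructor
  · intro h
    constructor
    · intro i hi htf
      rw [mem_Icc] at hi
      refine h i (by rw [mem_Icc]; omega) ?_
      intro j hj
      rw [mem_Icc] at hj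
      rcases Nat.lt_or_ge j (n+1) with hlt | hge
      · exact htf j (by rw [mem_Icc]; omega)
      · have : j = n+1 := by omega
        subst this; exact hnE
    · refine h (n+1) (by rw [mem_Icc]; omega) ?_
      intro j hj
      rw [mem_Icc] at hj
      have : j = n+1 := by omega
      subst this; exact hnE
  · rintro ⟨h, hd⟩ i hi htf
    rw [mem_Icc] at hi
    rcases Nat.lt_or_ge i (n+1) with hlt | hge
    · refine h i (by rw [mem_Icc]; omega) ?_
      intro j hj
      rw [mem_Icc] at hj
      exact htf j (by rw [mem_Icc]; omega)
    · have : i = n+1 := by omega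
      subst this; exact hd

lemma ad_succ_of_mem {n : ℕ} {E : Finset ℕ} {d : ℕ → Prop} (hnE : n+1 ∈ E) :
    ad (n+1) E d := by
  intro i hi htf
  rw [mem_Icc] at hi
  exact absurd hnE (htf (n+1) (by rw [mem_Icc]; omega))

lemma blc_succ_iff_mem {n : ℕ} {E : Finset ℕ} {d : ℕ → Prop} (hnE : n+1 ∈ E) :
    blc (n+1) E d ↔ blc n (E.erase (n+1)) d := by
  constructor
  · intro h i hi hd1 hd2
    rw [mem_Icc] at hi
    have := h i (by rw [mem_Icc]; omega) hd1 hd2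
    rcases this with h' | h'
    · exact Or.inl (mem_erase.2 ⟨by omega, h'⟩)
    · exact Or.inr (mem_erase.2 ⟨by omega, h'⟩)
  · intro h i hi hd1 hd2
    rw [mem_Icc] at hi
    rcases Nat.lt_or_ge i (n+1) with hlt | hge
    · have := h i (by rw [mem_Icc]; omega) hd1 hd2
      rcases this with h' | h'
      · exact Or.inl (mem_of_mem_erase h')
      · exact Or.inr (mem_of_mem_erase h')
    · have : i = n+1 := by omega
      subst this
      exact Or.inr hnE

lemma blc_succ_iff_notmem {n : ℕ} {E : Finset ℕ} {d : ℕ → Prop} (hnE : n+1 ∉ E)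
    (hnd : ¬ d (n+1)) : blc (n+1) E d ↔ blc n E d := by
  constructor
  · exact blc_of_succ
  · intro h i hi hd1 hd2
    rw [mem_Icc] at hi
    rcases Nat.lt_or_ge i (n+1) with hlt | hge
    · exact h i (by rw [mem_Icc]; omega) hd1 hd2
    · have : i = n+1 := by omega
      subst this
      exact absurd hd2 hnd

theorem A1' : ∀ (n : ℕ) (E : Finset ℕ), E ⊆ Icc 1 n → ∀ (d : ℕ → Prop), ∀ _ : DecidablePred d,
    (cnt n E d false = if blc n E d ∧ ad n E d then 2^E.card else 0) ∧
    (cnt n E d true = if blc n E d then (if ad n E d then 2^E.card else 2^(E.card+1)) else 0) := by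
  intro n
  induction n with
  | zero =>
    intro E hE d hd
    have hE0 : E = ∅ := by
      rw [← Finset.subset_empty]
      intro x hx
      have := hE hx
      rw [mem_Icc] at this
      omega
    subst hE0
    have hblc : blc 0 ∅ d := by intro i hi; rw [mem_Icc] at hi; omega
    have had : ad 0 ∅ d := by intro i hi; rw [mem_Icc] at hi; omega
    rw [if_pos ⟨hblc, had⟩, if_pos hblc, if_pos had]
    have hc : ∀ b : Bool, cnt 0 ∅ d b = 1 := by
      intro b
      unfold cnt
      have hcm : ∀ V : Finset ℕ, Cmpt 0 ∅ d V := by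
        intro V i hi
        rw [mem_Icc] at hi; omega
      rw [Finset.filter_congr (fun V _ => by simp [hcm V] : ∀ V ∈ (range 1).powerset,
        ((Cmpt 0 ∅ d V ∧ ((0:ℕ) ∈ V ↔ b = true)) ↔ ((0:ℕ) ∈ V ↔ b = true)))]
      rw [range_one]
      cases b <;> decide
    rw [hc true, hc false]
    simp
  | succ n ih =>
    intro E hE d hd
    by_cases hmem : n+1 ∈ E
    · -- boundary at the top: both signs free
      have hE' : E.erase (n+1) ⊆ Icc 1 n := by
        intro x hx
        rw [mem_erase] at hx
        have := hE hx.2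
        rw [mem_Icc] at this ⊢
        omega
      obtain ⟨ihF, ihT⟩ := ih (E.erase (n+1)) hE' d hd
      have hcard : E.card = (E.erase (n+1)).card + 1 := by
        rw [card_erase_of_mem hmem]
        have : E.card ≠ 0 := by
          intro h
          rw [Finset.card_eq_zero] at h
          subst h; simp at hmem
        omega
      have hsum : ∀ b : Bool, cnt (n+1) E d b = cnt n (E.erase (n+1)) d true + cnt n (E.erase (n+1)) d false := by
        intro b
        rw [cnt_succ]
        rw [if_pos (Or.inl hmem), if_pos (Or.inl hmem)]
      have hval : cnt n (E.erase (n+1)) d true + cnt n (E.erase (n+1)) d false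
          = if blc n (E.erase (n+1)) d then 2^E.card else 0 := by
        rw [ihF, ihT]
        by_cases hb : blc n (E.erase (n+1)) d
        · rw [if_pos hb, if_pos hb]
          by_cases ha : ad n (E.erase (n+1)) d
          · rw [if_pos ha, if_pos ⟨hb, ha⟩, hcard, pow_succ]
            ring
          · rw [if_neg ha, if_neg (fun h => ha h.2), hcard]
            omega
        · rw [if_neg hb, if_neg (fun h => hb h.1), if_neg hb]
      rw [hsum true, hsum false, hval]
      by_cases hb : blc n (E.erase (n+1)) d
      · have hb' : blc (n+1) E d := (blc_succ_iff_mem hmem).2 hb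
        rw [if_pos hb, if_pos ⟨hb', ad_succ_of_mem hmem⟩, if_pos hb',
          if_pos (ad_succ_of_mem hmem)]
        exact ⟨rfl, rfl⟩
      · have hb' : ¬ blc (n+1) E d := fun h => hb ((blc_succ_iff_mem hmem).1 h)
        rw [if_neg hb, if_neg (fun h => hb' h.1), if_neg hb']
        exact ⟨rfl, rfl⟩
    · -- no boundary at the top
      have hEsub : E ⊆ Icc 1 n := by
        intro x hx
        have h1 := hE hx
        rw [mem_Icc] at h1 ⊢
        have : x ≠ n+1 := fun h => hmem (h ▸ hx)
        omega
      have hEE : E.erase (n+1) = E := erase_eq_of_notMem hmem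
      obtain ⟨ihF, ihT⟩ := ih E hEsub d hd
      by_cases hdn : d (n+1)
      · -- descent at the last pair
        have hcF : cnt (n+1) E d false = cnt n E d false := by
          rw [cnt_succ, hEE]
          rw [if_neg ?h1, if_pos ?h2]
          case h1 =>
            rintro (h | h)
            · exact hmem h
            · exact (rule_TF).1 (by simpa using h)
          case h2 =>
            refine Or.inr ?_
            have : rule False False (d (n+1)) := rule_FF.2 hdn
            simpa using this
          omega
        have hcT : cnt (n+1) E d true = cnt n E d false := by
          rw [cnt_succ, hEE]
          rw [if_neg ?h3, if_pos ?h4]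
          case h3 =>
            rintro (h | h)
            · exact hmem h
            · exact (rule_TT).1 (by simpa using h) hdn
          case h4 =>
            refine Or.inr ?_
            have : rule False True (d (n+1)) := rule_FT.2 trivial
            simpa using this
          omega
        have hadn : ad (n+1) E d ↔ ad n E d := by
          rw [ad_succ_iff hmem]
          tauto
        rw [hcF, hcT, ihF]
        constructor
        · -- false count
          by_cases hb : blc (n+1) E d
          · have hadT : ad n E d := ad_succ_of_blc hmem hb hdn
            rw [if_pos ⟨blc_of_succ hb, hadT⟩, if_pos ⟨hb, hadn.2 hadT⟩]
          · rw [if_neg (fun h => hb (blc_succ_of_ad h.1 h.2)), if_neg (fun h => hb h.1)]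
        · -- true count
          by_cases hb : blc (n+1) E d
          · have hadT : ad n E d := ad_succ_of_blc hmem hb hdn
            rw [if_pos ⟨blc_of_succ hb, hadT⟩, if_pos hb, if_pos (hadn.2 hadT)]
          · rw [if_neg (fun h => hb (blc_succ_of_ad h.1 h.2)), if_neg hb]
      · -- ascent at the last pair
        have hcF : cnt (n+1) E d false = 0 := by
          rw [cnt_succ, hEE]
          rw [if_neg ?h5, if_neg ?h6]
          case h5 =>
            rintro (h | h)
            · exact hmem h
            · exact (rule_TF).1 (by simpa using h)
          case h6 =>
            rintro (h | h)
            · exact hmem h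
            · exact hdn ((rule_FF).1 (by simpa using h))
        have hcT : cnt (n+1) E d true = cnt n E d true + cnt n E d false := by
          rw [cnt_succ, hEE]
          rw [if_pos ?h7, if_pos ?h8]
          case h7 =>
            refine Or.inr ?_
            have : rule True True (d (n+1)) := rule_TT.2 hdn
            simpa using this
          case h8 =>
            refine Or.inr ?_
            have : rule False True (d (n+1)) := rule_FT.2 trivial
            simpa using this
        have hbiff : blc (n+1) E d ↔ blc n E d := blc_succ_iff_notmem hmem hdn
        have hadF : ¬ ad (n+1) E d := by
          rw [ad_succ_iff hmem]
          tauto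
        constructor
        · rw [hcF, if_neg (fun h => hadF h.2)]
        · rw [hcT, ihF, ihT]
          by_cases hb : blc n E d
          · rw [if_pos hb, if_pos (hbiff.2 hb), if_neg hadF]
            by_cases ha : ad n E d
            · rw [if_pos ha, if_pos ⟨hb, ha⟩, pow_succ]
              ring
            · rw [if_neg ha, if_neg (fun h => ha h.2)]
              omega
          · rw [if_neg hb, if_neg (fun h => hb h.1), if_neg (fun h => hb (hbiff.1 h))]

theorem A1_total (n : ℕ) (E : Finset ℕ) (hE : E ⊆ Icc 1 n) (d : ℕ → Prop) [DecidablePred d] :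
    (((range (n+1)).powerset).filter (Cmpt n E d)).card
      = if blc n E d then 2^(E.card+1) else 0 := by
  obtain ⟨hF, hT⟩ := A1' n E hE d _
  have hsplit : (((range (n+1)).powerset).filter (Cmpt n E d)).card
      = cnt n E d true + cnt n E d false := by
    rw [← card_filter_add_card_filter_not (p := fun V => n ∈ V),
      filter_filter, filter_filter]
    unfold cnt
    congr 1
    · congr 1
      apply filter_congr
      intro V _
      simp
    · congr 1
      apply filter_congr
      intro V _
      simp
  rw [hsplit, hF, hT]
  by_cases hb : blc n E d
  · rw [if_pos hb, if_pos hb]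
    by_cases ha : ad n E d
    · rw [if_pos ha, if_pos ⟨hb, ha⟩, pow_succ]
      ring
    · rw [if_neg ha, if_neg (fun h => ha h.2)]
      omega
  · rw [if_neg hb, if_neg (fun h => hb h.1), if_neg hb]

end S15

theorem Equiv.Perm.apply_inv_self {α : Type*} (f : Equiv.Perm α) (x : α) : f (f⁻¹ x) = x :=
  f.apply_symm_apply x

theorem Equiv.Perm.inv_apply_self {α : Type*} (f : Equiv.Perm α) (x : α) : f⁻¹ (f x) = x :=
  f.symm_apply_apply x

namespace S15
open Finset

variable {m : ℕ}

lemma multiset_map_perm (f : Fin m → ℕ) (τ : Equiv.Perm (Fin m)) :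
    (Finset.univ.val.map (fun p => f (τ p))) = Finset.univ.val.map f := by
  have : (Finset.univ.val.map (fun p => f (τ p)))
      = ((Finset.univ.map τ.toEmbedding).val.map f) := by
    rw [Finset.map_val, Multiset.map_map]
    rfl
  rw [this, Finset.map_univ_equiv]

lemma mono_eq_of_multiset {f g : Fin m → ℕ} (hf : Monotone f) (hg : Monotone g)
    (h : Finset.univ.val.map f = Finset.univ.val.map g) : f = g := by
  have hlist : List.ofFn f = List.ofFn g := by
    have huniv : (Finset.univ : Finset (Fin m)).val = ↑(List.finRange m) := by
      rw [Fin.univ_def]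
    rw [huniv] at h
    have h1 : ((List.finRange m).map f : Multiset ℕ) = ((List.finRange m).map g : Multiset ℕ) := by
      simpa using h
    have hperm : ((List.finRange m).map f).Perm ((List.finRange m).map g) :=
      Multiset.coe_eq_coe.1 h1
    rw [← List.ofFn_eq_map, ← List.ofFn_eq_map] at hperm
    exact List.Perm.eq_of_sortedLE hf.sortedLE_ofFn hg.sortedLE_ofFn hperm
  exact List.ofFn_injective hlist

/-- the permutation sorting an injective key -/
noncomputable def sortPerm (k : Fin m → ℕ) (_ : Function.Injective k) : Equiv.Perm (Fin m) :=
  Tuple.sort k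

lemma sortPerm_strictMono (k : Fin m → ℕ) (hk : Function.Injective k) :
    StrictMono (fun p => k (sortPerm k hk p)) := by
  have hmono : Monotone (k ∘ Tuple.sort k) := Tuple.monotone_sort k
  have hinj : Function.Injective (k ∘ Tuple.sort k) :=
    hk.comp (Tuple.sort k).injective
  exact hmono.strictMono_of_injective hinj

lemma sortPerm_unique {k : Fin m → ℕ} {hk : Function.Injective k} {τ : Equiv.Perm (Fin m)}
    (h : StrictMono (fun p => k (τ p))) : τ = sortPerm k hk := by
  have h1 : Monotone (k ∘ τ) := fun a b hab => h.monotone hab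
  have h2 : Monotone (k ∘ Tuple.sort k) := Tuple.monotone_sort k
  have h3 : k ∘ τ = k ∘ Tuple.sort k := Tuple.unique_monotone h1 h2
  apply Equiv.ext
  intro p
  exact hk (congrFun h3 p)

end S15

namespace S15
open Finset

/-! ### block levels -/

def lvl (E : Finset ℕ) (p : ℕ) : ℕ := (E.filter (· ≤ p)).card

lemma lvl_mono (E : Finset ℕ) : Monotone (lvl E) := by
  intro p q hpq
  apply card_le_card
  intro x hx
  rw [mem_filter] at hx ⊢
  exact ⟨hx.1, le_trans hx.2 hpq⟩

lemma lvl_succ_mem {E : Finset ℕ} {p : ℕ} (h : p + 1 ∈ E) :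
    lvl E (p+1) = lvl E p + 1 := by
  unfold lvl
  have : E.filter (· ≤ p+1) = insert (p+1) (E.filter (· ≤ p)) := by
    ext x
    rw [mem_insert, mem_filter, mem_filter]
    constructor
    · rintro ⟨hx, hle⟩
      rcases Nat.lt_or_ge x (p+1) with h' | h'
      · exact Or.inr ⟨hx, by omega⟩
      · exact Or.inl (by omega)
    · rintro (rfl | ⟨hx, hle⟩)
      · exact ⟨h, le_refl _⟩
      · exact ⟨hx, by omega⟩
  rw [this, card_insert_of_notMem]
  intro hmem
  rw [mem_filter] at hmem
  omega

lemma lvl_succ_not_mem {E : Finset ℕ} {p : ℕ} (h : p + 1 ∉ E) :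
    lvl E (p+1) = lvl E p := by
  unfold lvl
  congr 1
  ext x
  rw [mem_filter, mem_filter]
  constructor
  · rintro ⟨hx, hle⟩
    refine ⟨hx, ?_⟩
    rcases Nat.lt_or_ge x (p+1) with h' | h'
    · omega
    · have : x = p+1 := by omega
      rw [this] at hx
      exact absurd hx h
  · rintro ⟨hx, hle⟩
    exact ⟨hx, by omega⟩

variable {n : ℕ}

def lvlF (n : ℕ) (E : Finset ℕ) : Fin (n+1) → ℕ := fun p => lvl E ↑p

lemma lvlF_mono (E : Finset ℕ) : Monotone (lvlF n E) := by
  intro p q hpq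
  exact lvl_mono E (by exact_mod_cast hpq)

/-- block level of each value under an arrangement τ -/
def hkey (n : ℕ) (E : Finset ℕ) (τ : Equiv.Perm (Fin (n+1))) : Fin (n+1) → ℕ :=
  fun x => lvl E ↑(τ⁻¹ x)

lemma hkey_multiset (E : Finset ℕ) (τ : Equiv.Perm (Fin (n+1))) :
    Finset.univ.val.map (hkey n E τ) = Finset.univ.val.map (lvlF n E) := by
  have : hkey n E τ = fun p => lvlF n E (τ⁻¹ p) := rfl
  rw [this]
  exact multiset_map_perm (lvlF n E) τ⁻¹

/-! ### the two keys -/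

def key2 (n : ℕ) (E : Finset ℕ) (τ : Equiv.Perm (Fin (n+1))) : Fin (n+1) → ℕ :=
  fun x => (n+1) * hkey n E τ x + ↑x

lemma key2_inj (E : Finset ℕ) (τ : Equiv.Perm (Fin (n+1))) :
    Function.Injective (key2 n E τ) := by
  intro x y hxy
  unfold key2 at hxy
  have hx : (x : ℕ) < n+1 := x.isLt
  have hy : (y : ℕ) < n+1 := y.isLt
  have e1 : ((n+1) * hkey n E τ x + ↑x) % (n+1) = (x:ℕ) := by
    rw [Nat.mul_add_mod, Nat.mod_eq_of_lt hx]
  have e2 : ((n+1) * hkey n E τ y + ↑y) % (n+1) = (y:ℕ) := by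
    rw [Nat.mul_add_mod, Nat.mod_eq_of_lt hy]
  apply Fin.ext
  rw [← e1, ← e2, hxy]

def key3 (n : ℕ) (E : Finset ℕ) (σ : Equiv.Perm (Fin (n+1))) (U : Finset ℕ) :
    Fin (n+1) → ℕ :=
  fun x => (2*(n+1)) * hkey n E σ x + (if ↑(σ⁻¹ x) ∈ U then (n+1) + ↑x else n - ↑x)

lemma key3_inj (E : Finset ℕ) (σ : Equiv.Perm (Fin (n+1))) (U : Finset ℕ) :
    Function.Injective (key3 n E σ U) := by
  classical
  intro x y hxy
  unfold key3 at hxy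
  have hx : (x : ℕ) < n+1 := x.isLt
  have hy : (y : ℕ) < n+1 := y.isLt
  have hrx : (if ↑(σ⁻¹ x) ∈ U then (n+1) + (x:ℕ) else n - ↑x) < 2*(n+1) := by
    split <;> omega
  have hry : (if ↑(σ⁻¹ y) ∈ U then (n+1) + (y:ℕ) else n - ↑y) < 2*(n+1) := by
    split <;> omega
  have e1 : key3 n E σ U x % (2*(n+1))
      = (if ↑(σ⁻¹ x) ∈ U then (n+1) + (x:ℕ) else n - ↑x) := by
    unfold key3
    rw [Nat.mul_add_mod, Nat.mod_eq_of_lt hrx]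
  have e2 : key3 n E σ U y % (2*(n+1))
      = (if ↑(σ⁻¹ y) ∈ U then (n+1) + (y:ℕ) else n - ↑y) := by
    unfold key3
    rw [Nat.mul_add_mod, Nat.mod_eq_of_lt hry]
  have hxy' : key3 n E σ U x = key3 n E σ U y := by unfold key3; exact hxy
  have hr : (if ↑(σ⁻¹ x) ∈ U then (n+1) + (x:ℕ) else n - ↑x)
      = (if ↑(σ⁻¹ y) ∈ U then (n+1) + (y:ℕ) else n - ↑y) := by
    rw [← e1, ← e2, hxy']
  apply Fin.ext
  by_cases h1 : ↑(σ⁻¹ x) ∈ U <;> by_cases h2 : ↑(σ⁻¹ y) ∈ U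
  · rw [if_pos h1, if_pos h2] at hr; omega
  · rw [if_pos h1, if_neg h2] at hr; omega
  · rw [if_neg h1, if_pos h2] at hr; omega
  · rw [if_neg h1, if_neg h2] at hr; omega

lemma PV_eq (π : Equiv.Perm (Fin (n+1))) {j : ℕ} (h : j < n+1) :
    PV n π j = ↑(π ⟨j, h⟩) := dif_pos h

lemma strictMono_of_consec {f : Fin (n+1) → ℕ}
    (h : ∀ q : ℕ, ∀ hq : q < n, f ⟨q, by omega⟩ < f ⟨q+1, by omega⟩) : StrictMono f := by
  rw [Fin.strictMono_iff_lt_succ]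
  intro i
  exact h ↑i i.isLt

noncomputable def fwdPerm (n : ℕ) (E : Finset ℕ) (π : Equiv.Perm (Fin (n+1))) :
    Equiv.Perm (Fin (n+1)) := sortPerm (key2 n E π) (key2_inj E π)

noncomputable def bwdPerm (n : ℕ) (E : Finset ℕ) (σ : Equiv.Perm (Fin (n+1))) (U : Finset ℕ) :
    Equiv.Perm (Fin (n+1)) := sortPerm (key3 n E σ U) (key3_inj E σ U)

def posSet (n : ℕ) (τ ρ : Equiv.Perm (Fin (n+1))) (W : Finset ℕ) : Finset ℕ :=
  (range (n+1)).filter (fun q => if h : q < n+1 then ↑(ρ⁻¹ (τ ⟨q, h⟩)) ∈ W else False)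

lemma posSet_mem (τ ρ : Equiv.Perm (Fin (n+1))) (W : Finset ℕ) {q : ℕ} (h : q < n+1) :
    q ∈ posSet n τ ρ W ↔ ↑(ρ⁻¹ (τ ⟨q, h⟩)) ∈ W := by
  unfold posSet
  rw [mem_filter, mem_range, dif_pos h]
  tauto

lemma posSet_subset (τ ρ : Equiv.Perm (Fin (n+1))) (W : Finset ℕ) :
    posSet n τ ρ W ⊆ range (n+1) := filter_subset _ _

lemma posSet_roundtrip (τ ρ : Equiv.Perm (Fin (n+1))) (W : Finset ℕ)
    (hW : W ⊆ range (n+1)) : posSet n ρ τ (posSet n τ ρ W) = W := by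
  ext q
  by_cases hq : q < n+1
  · rw [posSet_mem _ _ _ hq]
    have hp : (↑(τ⁻¹ (ρ ⟨q, hq⟩)) : ℕ) < n+1 := (τ⁻¹ (ρ ⟨q, hq⟩)).isLt
    rw [posSet_mem _ _ _ hp]
    have he : (⟨↑(τ⁻¹ (ρ ⟨q, hq⟩)), hp⟩ : Fin (n+1)) = τ⁻¹ (ρ ⟨q, hq⟩) := Fin.eta _ _
    rw [he, Equiv.Perm.apply_inv_self, Equiv.Perm.inv_apply_self]
  · constructor
    · intro h
      exact absurd (mem_range.1 (posSet_subset _ _ _ h)) hq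
    · intro h
      exact absurd (mem_range.1 (hW h)) hq

lemma hkey_eq_lvlF_of_mono (E : Finset ℕ) (τ ρ : Equiv.Perm (Fin (n+1)))
    (hmono : Monotone (fun p => hkey n E τ (ρ p))) :
    (fun p => hkey n E τ (ρ p)) = lvlF n E := by
  apply mono_eq_of_multiset hmono (lvlF_mono E)
  calc Finset.univ.val.map (fun p => hkey n E τ (ρ p))
      = Finset.univ.val.map (hkey n E τ) := multiset_map_perm (hkey n E τ) ρ
    _ = Finset.univ.val.map (lvlF n E) := hkey_multiset E τ

lemma hkey_fwd (E : Finset ℕ) (π : Equiv.Perm (Fin (n+1))) :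
    (fun p => hkey n E π (fwdPerm n E π p)) = lvlF n E := by
  have hsm := sortPerm_strictMono (key2 n E π) (key2_inj E π)
  have hdiv : ∀ x, hkey n E π x = key2 n E π x / (n+1) := by
    intro x
    unfold key2
    rw [Nat.mul_add_div (by omega), Nat.div_eq_of_lt x.isLt]
    omega
  apply hkey_eq_lvlF_of_mono
  intro a b hab
  show hkey n E π (fwdPerm n E π a) ≤ hkey n E π (fwdPerm n E π b)
  rw [hdiv, hdiv]
  exact Nat.div_le_div_right (hsm.monotone hab)

lemma hkey_bwd (E : Finset ℕ) (σ : Equiv.Perm (Fin (n+1))) (U : Finset ℕ) :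
    (fun p => hkey n E σ (bwdPerm n E σ U p)) = lvlF n E := by
  classical
  have hsm := sortPerm_strictMono (key3 n E σ U) (key3_inj E σ U)
  have hdiv : ∀ x, hkey n E σ x = key3 n E σ U x / (2*(n+1)) := by
    intro x
    unfold key3
    rw [Nat.mul_add_div (by omega)]
    have : (if ↑(σ⁻¹ x) ∈ U then (n+1) + (x:ℕ) else n - ↑x) / (2*(n+1)) = 0 := by
      apply Nat.div_eq_of_lt
      have := x.isLt
      split <;> omega
    omega
  apply hkey_eq_lvlF_of_mono
  intro a b hab
  show hkey n E σ (bwdPerm n E σ U a) ≤ hkey n E σ (bwdPerm n E σ U b)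
  rw [hdiv, hdiv]
  exact Nat.div_le_div_right (hsm.monotone hab)

/-- the forward permutation is ascending within blocks -/
lemma desF_fwd_subset (E : Finset ℕ) (π : Equiv.Perm (Fin (n+1))) :
    desF n (fwdPerm n E π) ⊆ E := by
  intro i hi
  unfold desF at hi
  rw [mem_filter, mem_Icc] at hi
  obtain ⟨⟨hi1, hin⟩, hdsc⟩ := hi
  by_contra hiE
  have hsm := sortPerm_strictMono (key2 n E π) (key2_inj E π)
  have hA : (i-1 : ℕ) < n+1 := by omega
  have hB : (i : ℕ) < n+1 := by omega
  have hlt : (⟨i-1, hA⟩ : Fin (n+1)) < ⟨i, hB⟩ := by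
    rw [Fin.mk_lt_mk]; omega
  have hk : key2 n E π (fwdPerm n E π ⟨i-1, hA⟩) < key2 n E π (fwdPerm n E π ⟨i, hB⟩) :=
    hsm hlt
  unfold key2 at hk
  have e1 : hkey n E π (fwdPerm n E π ⟨i-1, hA⟩) = lvl E (i-1) :=
    congrFun (hkey_fwd E π) ⟨i-1, hA⟩
  have e2 : hkey n E π (fwdPerm n E π ⟨i, hB⟩) = lvl E i :=
    congrFun (hkey_fwd E π) ⟨i, hB⟩
  have e3 : lvl E i = lvl E (i-1) := by
    have hii : i - 1 + 1 = i := by omega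
    have := lvl_succ_not_mem (E := E) (p := i-1) (by rw [hii]; exact hiE)
    rw [hii] at this
    exact this
  rw [e1, e2, e3] at hk
  have hval : (↑(fwdPerm n E π ⟨i-1, hA⟩) : ℕ) < ↑(fwdPerm n E π ⟨i, hB⟩) := by omega
  unfold dsc at hdsc
  rw [PV_eq _ hB, PV_eq _ hA] at hdsc
  omega

/-- compatibility implies the 3rd key is sorted along π -/
lemma key3_strictMono_of_cmpt (E : Finset ℕ) (π : Equiv.Perm (Fin (n+1))) (V : Finset ℕ)
    (hC : Cmpt n E (dsc n π) V) :
    StrictMono (fun p => key3 n E π V (π p)) := by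
  classical
  apply strictMono_of_consec
  intro q hq
  have hA : (q : ℕ) < n+1 := by omega
  have hB : (q+1 : ℕ) < n+1 := by omega
  show key3 n E π V (π ⟨q, hA⟩) < key3 n E π V (π ⟨q+1, hB⟩)
  unfold key3
  have hiA : π⁻¹ (π ⟨q, hA⟩) = ⟨q, hA⟩ := Equiv.Perm.inv_apply_self _ _
  have hiB : π⁻¹ (π ⟨q+1, hB⟩) = ⟨q+1, hB⟩ := Equiv.Perm.inv_apply_self _ _
  have eA : hkey n E π (π ⟨q, hA⟩) = lvl E q := by
    unfold hkey; rw [hiA]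
  have eB : hkey n E π (π ⟨q+1, hB⟩) = lvl E (q+1) := by
    unfold hkey; rw [hiB]
  rw [hiA, hiB, eA, eB]
  simp only [Fin.val_mk]
  have hvA : (↑(π ⟨q, hA⟩) : ℕ) < n+1 := (π ⟨q, hA⟩).isLt
  have hvB : (↑(π ⟨q+1, hB⟩) : ℕ) < n+1 := (π ⟨q+1, hB⟩).isLt
  by_cases hE : q+1 ∈ E
  · -- level jump
    rw [lvl_succ_mem hE]
    have hexp : 2*(n+1)*(lvl E q + 1) = 2*(n+1)*(lvl E q) + 2*(n+1) := by ring
    rw [hexp]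
    have h1 : (if (q:ℕ) ∈ V then (n+1) + (↑(π ⟨q, hA⟩):ℕ) else n - ↑(π ⟨q, hA⟩)) < 2*(n+1) := by
      split <;> omega
    omega
  · -- same level: use the rule
    have heq := lvl_succ_not_mem (E := E) (p := q) hE
    rw [heq]
    have hrule := hC (q+1) (by rw [mem_Icc]; omega) hE
    have hq1 : (q+1) - 1 = q := by omega
    rw [hq1] at hrule
    obtain ⟨r1, r2, r3⟩ := hrule
    have hne : (↑(π ⟨q, hA⟩) : ℕ) ≠ ↑(π ⟨q+1, hB⟩) := by
      intro h
      have := π.injective (Fin.val_injective h)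
      rw [Fin.mk.injEq] at this
      omega
    have hdsc_iff : dsc n π (q+1) ↔ (↑(π ⟨q+1, hB⟩) : ℕ) < ↑(π ⟨q, hA⟩) := by
      unfold dsc
      rw [PV_eq _ hB, hq1, PV_eq _ hA]
    by_cases ha : (q:ℕ) ∈ V <;> by_cases hb : (q+1 : ℕ) ∈ V
    · -- both plus: ascent
      have hasc := r3 ⟨ha, hb⟩
      rw [hdsc_iff] at hasc
      rw [if_pos ha, if_pos hb]
      omega
    · exact absurd (r1 ha) hb
    · -- minus then plus
      rw [if_neg ha, if_pos hb]
      omega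
    · -- both minus: descent
      have hdsc := r2 ⟨ha, hb⟩
      rw [hdsc_iff] at hdsc
      rw [if_neg ha, if_neg hb]
      omega

lemma cmpt_bwd (E : Finset ℕ) (σ : Equiv.Perm (Fin (n+1))) (U : Finset ℕ) :
    Cmpt n E (dsc n (bwdPerm n E σ U)) (posSet n (bwdPerm n E σ U) σ U) := by
  classical
  intro i hi hiE
  rw [mem_Icc] at hi
  set τ := bwdPerm n E σ U with hτ
  have hA : (i-1 : ℕ) < n+1 := by omega
  have hB : (i : ℕ) < n+1 := by omega
  have hsm := sortPerm_strictMono (key3 n E σ U) (key3_inj E σ U)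
  have hlt : (⟨i-1, hA⟩ : Fin (n+1)) < ⟨i, hB⟩ := by rw [Fin.mk_lt_mk]; omega
  have hk : key3 n E σ U (τ ⟨i-1, hA⟩) < key3 n E σ U (τ ⟨i, hB⟩) := hsm hlt
  unfold key3 at hk
  have e1 : hkey n E σ (τ ⟨i-1, hA⟩) = lvl E (i-1) := congrFun (hkey_bwd E σ U) ⟨i-1, hA⟩
  have e2 : hkey n E σ (τ ⟨i, hB⟩) = lvl E i := congrFun (hkey_bwd E σ U) ⟨i, hB⟩
  have e3 : lvl E i = lvl E (i-1) := by
    have hii : i - 1 + 1 = i := by omega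
    have := lvl_succ_not_mem (E := E) (p := i-1) (by rw [hii]; exact hiE)
    rw [hii] at this
    exact this
  rw [e1, e2, e3] at hk
  have hvA : (↑(τ ⟨i-1, hA⟩) : ℕ) < n+1 := (τ ⟨i-1, hA⟩).isLt
  have hvB : (↑(τ ⟨i, hB⟩) : ℕ) < n+1 := (τ ⟨i, hB⟩).isLt
  have hmA : (i-1) ∈ posSet n τ σ U ↔ ↑(σ⁻¹ (τ ⟨i-1, hA⟩)) ∈ U := posSet_mem τ σ U hA
  have hmB : i ∈ posSet n τ σ U ↔ ↑(σ⁻¹ (τ ⟨i, hB⟩)) ∈ U := posSet_mem τ σ U hB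
  have hdsc_iff : dsc n τ i ↔ (↑(τ ⟨i, hB⟩) : ℕ) < ↑(τ ⟨i-1, hA⟩) := by
    unfold dsc
    rw [PV_eq _ hB, PV_eq _ hA]
  refine ⟨?_, ?_, ?_⟩
  · intro ha
    rw [hmA] at ha
    rw [if_pos ha] at hk
    rw [hmB]
    by_contra hb
    rw [if_neg hb] at hk
    omega
  · rintro ⟨ha, hb⟩
    rw [hmA] at ha
    rw [hmB] at hb
    rw [if_neg ha, if_neg hb] at hk
    rw [hdsc_iff]
    omega
  · rintro ⟨ha, hb⟩
    rw [hmA] at ha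
    rw [hmB] at hb
    rw [if_pos ha, if_pos hb] at hk
    rw [hdsc_iff]
    omega

lemma key2_strictMono_of_des (E : Finset ℕ) (σ : Equiv.Perm (Fin (n+1)))
    (hdes : desF n σ ⊆ E) : StrictMono (fun p => key2 n E σ (σ p)) := by
  apply strictMono_of_consec
  intro q hq
  have hA : (q : ℕ) < n+1 := by omega
  have hB : (q+1 : ℕ) < n+1 := by omega
  show key2 n E σ (σ ⟨q, hA⟩) < key2 n E σ (σ ⟨q+1, hB⟩)
  unfold key2
  have hiA : σ⁻¹ (σ ⟨q, hA⟩) = ⟨q, hA⟩ := Equiv.Perm.inv_apply_self _ _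
  have hiB : σ⁻¹ (σ ⟨q+1, hB⟩) = ⟨q+1, hB⟩ := Equiv.Perm.inv_apply_self _ _
  have eA : hkey n E σ (σ ⟨q, hA⟩) = lvl E q := by unfold hkey; rw [hiA]
  have eB : hkey n E σ (σ ⟨q+1, hB⟩) = lvl E (q+1) := by unfold hkey; rw [hiB]
  rw [eA, eB]
  have hvA : (↑(σ ⟨q, hA⟩) : ℕ) < n+1 := (σ ⟨q, hA⟩).isLt
  have hvB : (↑(σ ⟨q+1, hB⟩) : ℕ) < n+1 := (σ ⟨q+1, hB⟩).isLt
  by_cases hE : q+1 ∈ E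
  · rw [lvl_succ_mem hE]
    have hexp : (n+1)*(lvl E q + 1) = (n+1)*(lvl E q) + (n+1) := by ring
    rw [hexp]
    omega
  · rw [lvl_succ_not_mem hE]
    have hnd : ¬ dsc n σ (q+1) := by
      intro hd
      have : q+1 ∈ desF n σ := by
        unfold desF
        rw [mem_filter, mem_Icc]
        exact ⟨⟨by omega, by omega⟩, hd⟩
      exact hE (hdes this)
    unfold dsc at hnd
    rw [PV_eq _ hB] at hnd
    have hq1 : (q+1) - 1 = q := by omega
    rw [hq1, PV_eq _ hA] at hnd
    have hne : (↑(σ ⟨q, hA⟩) : ℕ) ≠ ↑(σ ⟨q+1, hB⟩) := by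
      intro h
      have := σ.injective (Fin.val_injective h)
      rw [Fin.mk.injEq] at this
      omega
    omega

lemma sortPerm_congr {m : ℕ} {k k' : Fin m → ℕ} (hk : Function.Injective k)
    (h : k = k') : sortPerm k hk = sortPerm k' (h ▸ hk) := by
  subst h
  rfl

theorem A2_card (n : ℕ) (E : Finset ℕ) :
    (((Finset.univ : Finset (Equiv.Perm (Fin (n+1)))) ×ˢ (range (n+1)).powerset).filter
       (fun z => Cmpt n E (dsc n z.1) z.2)).card
    = ((Finset.univ.filter (fun σ : Equiv.Perm (Fin (n+1)) => desF n σ ⊆ E)) ×ˢ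
       (range (n+1)).powerset).card := by
  classical
  refine card_bij' (fun z _ => (fwdPerm n E z.1, posSet n (fwdPerm n E z.1) z.1 z.2))
    (fun w _ => (bwdPerm n E w.1 w.2, posSet n (bwdPerm n E w.1 w.2) w.1 w.2))
    ?hi ?hj ?left ?right
  case hi =>
    rintro ⟨π, V⟩ hz
    rw [mem_filter] at hz
    rw [mem_product, mem_filter, mem_powerset]
    exact ⟨⟨mem_univ _, desF_fwd_subset E π⟩, posSet_subset _ _ _⟩
  case hj =>
    rintro ⟨σ, U⟩ hw
    rw [mem_product, mem_filter, mem_powerset] at hw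
    rw [mem_filter, mem_product, mem_powerset]
    exact ⟨⟨mem_univ _, posSet_subset _ _ _⟩, cmpt_bwd E σ U⟩
  case left =>
    rintro ⟨π, V⟩ hz
    rw [mem_filter, mem_product, mem_powerset] at hz
    obtain ⟨⟨-, hV⟩, hC⟩ := hz
    simp only
    have hfun : key3 n E (fwdPerm n E π) (posSet n (fwdPerm n E π) π V) = key3 n E π V := by
      funext x
      unfold key3
      have hh : hkey n E (fwdPerm n E π) x = hkey n E π x := by
        have h1 : hkey n E (fwdPerm n E π) x = lvlF n E ((fwdPerm n E π)⁻¹ x) := rfl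
        rw [h1, ← congrFun (hkey_fwd E π) ((fwdPerm n E π)⁻¹ x),
          Equiv.Perm.apply_inv_self]
      have hiff : (↑((fwdPerm n E π)⁻¹ x) ∈ posSet n (fwdPerm n E π) π V)
          ↔ (↑(π⁻¹ x) ∈ V) := by
        rw [posSet_mem _ _ _ ((fwdPerm n E π)⁻¹ x).isLt]
        rw [Fin.eta, Equiv.Perm.apply_inv_self]
      rw [hh, if_congr hiff rfl rfl]
    have hbwd : bwdPerm n E (fwdPerm n E π) (posSet n (fwdPerm n E π) π V) = π := by
      unfold bwdPerm
      rw [sortPerm_congr _ hfun]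
      exact (sortPerm_unique (key3_strictMono_of_cmpt E π V hC)).symm
    rw [hbwd]
    rw [posSet_roundtrip (fwdPerm n E π) π V hV]
  case right =>
    rintro ⟨σ, U⟩ hw
    rw [mem_product, mem_filter, mem_powerset] at hw
    obtain ⟨⟨-, hdes⟩, hU⟩ := hw
    simp only
    have hfun : key2 n E (bwdPerm n E σ U) = key2 n E σ := by
      funext x
      unfold key2
      have hh : hkey n E (bwdPerm n E σ U) x = hkey n E σ x := by
        have h1 : hkey n E (bwdPerm n E σ U) x = lvlF n E ((bwdPerm n E σ U)⁻¹ x) := rfl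
        rw [h1, ← congrFun (hkey_bwd E σ U) ((bwdPerm n E σ U)⁻¹ x),
          Equiv.Perm.apply_inv_self]
      rw [hh]
    have hfwd : fwdPerm n E (bwdPerm n E σ U) = σ := by
      unfold fwdPerm
      rw [sortPerm_congr _ hfun]
      exact (sortPerm_unique (key2_strictMono_of_des E σ hdes)).symm
    rw [hfwd]
    rw [posSet_roundtrip (bwdPerm n E σ U) σ U hU]

lemma blocksS_iff_blc (E : Finset ℕ) (π : Equiv.Perm (Fin (n+1))) :
    blocksS (peakSet n π) E ↔ blc n E (dsc n π) := by
  rw [peakSet_eq_filter]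
  constructor
  · intro h i hi hd1 hd2
    exact h i (by rw [mem_filter]; exact ⟨hi, hd1, hd2⟩)
  · intro h i hi
    rw [mem_filter] at hi
    exact h i hi.1 hi.2.1 hi.2.2

theorem Akey (n : ℕ) (E : Finset ℕ) (hE : E ⊆ Icc 1 n) :
    2^(E.card+1) *
      (Finset.univ.filter (fun π : Equiv.Perm (Fin (n+1)) => blocksS (peakSet n π) E)).card
    = 2^(n+1) *
      (Finset.univ.filter (fun σ : Equiv.Perm (Fin (n+1)) => desF n σ ⊆ E)).card := by
  classical
  have h1 : (((Finset.univ : Finset (Equiv.Perm (Fin (n+1)))) ×ˢ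
        (range (n+1)).powerset).filter (fun z => Cmpt n E (dsc n z.1) z.2)).card
      = ∑ π : Equiv.Perm (Fin (n+1)),
          (((range (n+1)).powerset).filter (Cmpt n E (dsc n π))).card := by
    rw [card_filter, sum_product]
    apply Finset.sum_congr rfl
    intro π _
    rw [card_filter]
  have h2 : ∀ π : Equiv.Perm (Fin (n+1)),
      (((range (n+1)).powerset).filter (Cmpt n E (dsc n π))).card
        = if blocksS (peakSet n π) E then 2^(E.card+1) else 0 := by
    intro π
    rw [A1_total n E hE (dsc n π)]
    by_cases h : blc n E (dsc n π)
    · rw [if_pos h, if_pos ((blocksS_iff_blc E π).2 h)]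
    · rw [if_neg h, if_neg (fun hh => h ((blocksS_iff_blc E π).1 hh))]
  have h3 : (((Finset.univ : Finset (Equiv.Perm (Fin (n+1)))) ×ˢ
        (range (n+1)).powerset).filter (fun z => Cmpt n E (dsc n z.1) z.2)).card
      = 2^(E.card+1) *
        (Finset.univ.filter (fun π : Equiv.Perm (Fin (n+1)) => blocksS (peakSet n π) E)).card := by
    rw [h1]
    rw [Finset.sum_congr rfl (fun π _ => h2 π)]
    rw [← Finset.sum_filter, Finset.sum_const, smul_eq_mul, mul_comm]
  have h4 : (((Finset.univ : Finset (Equiv.Perm (Fin (n+1)))) ×ˢ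
        (range (n+1)).powerset).filter (fun z => Cmpt n E (dsc n z.1) z.2)).card
      = (Finset.univ.filter (fun σ : Equiv.Perm (Fin (n+1)) => desF n σ ⊆ E)).card
        * 2^(n+1) := by
    rw [A2_card n E, card_product, card_powerset, card_range]
  rw [← h3, h4, mul_comm]

end S15

namespace S15
open Finset

/-- every pair `{i-1,i}`, `i ∈ P`, meets both `R` and its complement -/
def flipP (P R : Finset ℕ) : Prop :=
  ∀ i ∈ P, ((i-1 ∈ R ∨ i ∈ R) ∧ (i-1 ∉ R ∨ i ∉ R))

instance {P R : Finset ℕ} : Decidable (flipP P R) := by unfold flipP; infer_instance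

theorem B_identity (R : Finset ℕ) : ∀ (P : Finset ℕ), (∀ i ∈ P, 2 ≤ i) → (∀ i ∈ P, i-1 ∉ P) →
    ∑ E ∈ R.powerset, (-1:ℤ)^((R\E).card) * 2^(E.card+1) * (if blocksS P E then 1 else 0)
      = 2^(P.card+1) * (if flipP P R then 1 else 0) := by
  classical
  induction R using Finset.induction_on with
  | empty =>
    intro P h2 hs
    rw [powerset_empty, sum_singleton]
    by_cases hP : P = ∅
    · subst hP
      have hbl : blocksS ∅ ∅ := by intro i hi; simp at hi
      have hfl : flipP ∅ ∅ := by intro i hi; simp at hi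
      rw [if_pos hbl, if_pos hfl]
      simp
    · obtain ⟨i, hi⟩ := Finset.nonempty_iff_ne_empty.2 hP
      have hbl : ¬ blocksS ∅ ∅ → True := fun _ => trivial
      have hbl2 : ¬ blocksS P ∅ := by
        intro h
        rcases h i hi with h' | h' <;> simp at h'
      have hfl2 : ¬ flipP P ∅ := by
        intro h
        rcases (h i hi).1 with h' | h' <;> simp at h'
      rw [if_neg hbl2, if_neg hfl2]
      simp
  | @insert r R' hr ih =>
    intro P h2 hs
    rw [Finset.sum_powerset_insert hr]
    -- common card facts
    have c1 : ∀ E ∈ R'.powerset, ((insert r R' \ E).card) = (R' \ E).card + 1 := by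
      intro E hE
      rw [mem_powerset] at hE
      have hrE : r ∉ E := fun h => hr (hE h)
      have : insert r R' \ E = insert r (R' \ E) := by
        ext x
        simp only [mem_sdiff, mem_insert]
        constructor
        · rintro ⟨(rfl | hx), hxe⟩
          · exact Or.inl rfl
          · exact Or.inr ⟨hx, hxe⟩
        · rintro (rfl | ⟨hx, hxe⟩)
          · exact ⟨Or.inl rfl, hrE⟩
          · exact ⟨Or.inr hx, hxe⟩
      rw [this, card_insert_of_notMem (fun h => hr (mem_sdiff.1 h).1)]
    have c2 : ∀ E ∈ R'.powerset, ((insert r R' \ insert r E).card) = (R' \ E).card := by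
      intro E hE
      rw [mem_powerset] at hE
      congr 1
      ext x
      simp only [mem_sdiff, mem_insert]
      constructor
      · rintro ⟨(rfl | hx), hxe⟩
        · exact absurd (Or.inl rfl) hxe
        · push_neg at hxe
          exact ⟨hx, hxe.2⟩
      · rintro ⟨hx, hxe⟩
        have hxr : x ≠ r := fun h => hr (h ▸ hx)
        exact ⟨Or.inr hx, by push_neg; exact ⟨hxr, hxe⟩⟩
    have c3 : ∀ E ∈ R'.powerset, (insert r E).card = E.card + 1 := by
      intro E hE
      rw [mem_powerset] at hE
      exact card_insert_of_notMem (fun h => hr (hE h))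
    by_cases hcase : r ∈ P ∨ r + 1 ∈ P
    · -- r touches exactly one pair, that of i₀, with other element o
      obtain ⟨i₀, o, hi₀P, hro, hor, hnotouch⟩ :
          ∃ i₀ o : ℕ, i₀ ∈ P ∧ ((i₀ - 1 = o ∧ i₀ = r) ∨ (i₀ - 1 = r ∧ i₀ = o)) ∧ o ≠ r ∧
            (∀ i ∈ P.erase i₀, i ≠ r ∧ i - 1 ≠ r) := by
        rcases hcase with h1 | h1
        · refine ⟨r, r-1, h1, Or.inl ⟨rfl, rfl⟩, by have := h2 r h1; omega, ?_⟩
          intro i hi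
          rw [mem_erase] at hi
          obtain ⟨hne, hiP⟩ := hi
          refine ⟨hne, ?_⟩
          intro hbad
          have h2i := h2 i hiP
          have : i = r + 1 := by omega
          subst this
          exact (hs (r+1) hiP) (by simpa using h1)
        · refine ⟨r+1, r+1, h1, Or.inr ⟨by omega, rfl⟩, by omega, ?_⟩
          intro i hi
          rw [mem_erase] at hi
          obtain ⟨hne, hiP⟩ := hi
          constructor
          · intro hbad
            subst hbad
            exact (hs (i+1) h1) (by simpa using hiP)
          · intro hbad
            have h2i := h2 i hiP
            have : i = r + 1 := by omega
            exact hne this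
      have h2i₀ := h2 i₀ hi₀P
      -- fact: blocksS P (insert r E) ↔ blocksS (P.erase i₀) E
      have F_blins : ∀ E ∈ R'.powerset, (blocksS P (insert r E) ↔ blocksS (P.erase i₀) E) := by
        intro E hE
        rw [mem_powerset] at hE
        constructor
        · intro h i hi
          have hi' := mem_of_mem_erase hi
          have hnt := hnotouch i hi
          rcases h i hi' with h' | h'
          · rcases mem_insert.1 h' with h'' | h''
            · exact absurd h'' hnt.2
            · exact Or.inl h''
          · rcases mem_insert.1 h' with h'' | h''
            · exact absurd h'' hnt.1
            · exact Or.inr h''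
        · intro h i hi
          by_cases hii : i = i₀
          · subst hii
            rcases hro with ⟨ho, hir⟩ | ⟨hir, ho⟩
            · exact Or.inr (by rw [hir]; exact mem_insert_self _ _)
            · exact Or.inl (by rw [hir]; exact mem_insert_self _ _)
          · rcases h i (mem_erase.2 ⟨hii, hi⟩) with h' | h'
            · exact Or.inl (mem_insert_of_mem h')
            · exact Or.inr (mem_insert_of_mem h')
      -- flip facts
      have F_flip_ins : flipP P (insert r R') ↔ (flipP (P.erase i₀) R' ∧ o ∉ R') := by
        constructor
        · intro h
          constructor
          · intro i hi
            have hi' := mem_of_mem_erase hi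
            have hnt := hnotouch i hi
            obtain ⟨ha, hb⟩ := h i hi'
            constructor
            · rcases ha with h' | h'
              · rcases mem_insert.1 h' with h'' | h''
                · exact absurd h'' hnt.2
                · exact Or.inl h''
              · rcases mem_insert.1 h' with h'' | h''
                · exact absurd h'' hnt.1
                · exact Or.inr h''
            · rcases hb with h' | h'
              · exact Or.inl (fun hm => h' (mem_insert_of_mem hm))
              · exact Or.inr (fun hm => h' (mem_insert_of_mem hm))
          · -- o ∉ R'
            obtain ⟨ha, hb⟩ := h i₀ hi₀P
            rcases hro with ⟨ho, hir⟩ | ⟨hir, ho⟩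
            · -- i₀ = r, o = i₀ - 1 = r - 1
              rcases hb with h' | h'
              · intro hm
                exact h' (by rw [ho]; exact mem_insert_of_mem hm)
              · exact absurd (by rw [hir]; exact mem_insert_self _ _) h'
            · -- i₀ - 1 = r, o = i₀
              rcases hb with h' | h'
              · exact absurd (by rw [hir]; exact mem_insert_self _ _) h'
              · intro hm
                exact h' (by rw [← ho] at hm; exact mem_insert_of_mem hm)
        · rintro ⟨h, hoR⟩ i hi
          by_cases hii : i = i₀
          · subst hii
            rcases hro with ⟨ho, hir⟩ | ⟨hir, ho⟩
            · refine ⟨Or.inr (by rw [hir]; exact mem_insert_self _ _), Or.inl ?_⟩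
              rw [ho]
              intro hm
              rcases mem_insert.1 hm with h' | h'
              · exact hor h'
              · exact hoR h'
            · refine ⟨Or.inl (by rw [hir]; exact mem_insert_self _ _), Or.inr ?_⟩
              rw [ho]
              intro hm
              rcases mem_insert.1 hm with h' | h'
              · exact hor h'
              · exact hoR h'
          · have hnt := hnotouch i (mem_erase.2 ⟨hii, hi⟩)
            obtain ⟨ha, hb⟩ := h i (mem_erase.2 ⟨hii, hi⟩)
            constructor
            · rcases ha with h' | h'
              · exact Or.inl (mem_insert_of_mem h')
              · exact Or.inr (mem_insert_of_mem h')
            · rcases hb with h' | h'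
              · refine Or.inl (fun hm => ?_)
                rcases mem_insert.1 hm with h'' | h''
                · exact hnt.2 h''
                · exact h' h''
              · refine Or.inr (fun hm => ?_)
                rcases mem_insert.1 hm with h'' | h''
                · exact hnt.1 h''
                · exact h' h''
      have F_flip_R' : flipP P R' ↔ (flipP (P.erase i₀) R' ∧ o ∈ R') := by
        constructor
        · intro h
          constructor
          · intro i hi
            exact h i (mem_of_mem_erase hi)
          · obtain ⟨ha, hb⟩ := h i₀ hi₀P
            rcases hro with ⟨ho, hir⟩ | ⟨hir, ho⟩
            · -- i₀ = r ∉ R', so i₀ - 1 = o must be in R'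
              rcases ha with h' | h'
              · rw [← ho]; exact h'
              · rw [hir] at h'; exact absurd h' hr
            · rcases ha with h' | h'
              · rw [hir] at h'; exact absurd h' hr
              · rw [← ho]; exact h'
        · rintro ⟨h, hoR⟩ i hi
          by_cases hii : i = i₀
          · subst hii
            rcases hro with ⟨ho, hir⟩ | ⟨hir, ho⟩
            · refine ⟨Or.inl (by rw [ho]; exact hoR), Or.inr ?_⟩
              rw [hir]
              exact hr
            · refine ⟨Or.inr (by rw [ho]; exact hoR), Or.inl ?_⟩
              rw [hir]
              exact hr
          · exact h i (mem_erase.2 ⟨hii, hi⟩)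
      -- apply the inductive hypothesis twice
      have hsub : P.erase i₀ ⊆ P := erase_subset _ _
      have ih1 := ih P h2 hs
      have ih2 := ih (P.erase i₀) (fun i hi => h2 i (hsub hi)) (fun i hi => by
        intro hbad
        exact hs i (hsub hi) (mem_of_mem_erase hbad))
      have hcard : (P.erase i₀).card + 1 = P.card := by
        rw [card_erase_of_mem hi₀P]
        have : P.card ≠ 0 := by
          intro h
          rw [Finset.card_eq_zero] at h
          subst h
          simp at hi₀P
        omega
      -- rewrite the two sums
      have hsum1 : ∑ E ∈ R'.powerset,
          (-1:ℤ)^((insert r R' \ E).card) * 2^(E.card+1) * (if blocksS P E then 1 else 0)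
          = - ∑ E ∈ R'.powerset,
            (-1:ℤ)^((R' \ E).card) * 2^(E.card+1) * (if blocksS P E then 1 else 0) := by
        rw [← Finset.sum_neg_distrib]
        apply Finset.sum_congr rfl
        intro E hE
        rw [c1 E hE, pow_succ]
        ring
      have hsum2 : ∑ E ∈ R'.powerset,
          (-1:ℤ)^((insert r R' \ insert r E).card) * 2^((insert r E).card+1) *
            (if blocksS P (insert r E) then 1 else 0)
          = 2 * ∑ E ∈ R'.powerset,
            (-1:ℤ)^((R' \ E).card) * 2^(E.card+1) * (if blocksS (P.erase i₀) E then 1 else 0) := by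
        rw [Finset.mul_sum]
        apply Finset.sum_congr rfl
        intro E hE
        rw [c2 E hE, c3 E hE]
        rw [if_congr (F_blins E hE) rfl rfl]
        rw [pow_succ]
        ring
      rw [hsum1, hsum2, ih1, ih2]
      -- final arithmetic
      rw [if_congr F_flip_ins rfl rfl, if_congr F_flip_R' rfl rfl]
      rw [← hcard]
      by_cases hfe : flipP (P.erase i₀) R' <;> by_cases ho : o ∈ R' <;>
        simp [hfe, ho, pow_succ] <;> ring
    · -- r touches no pair of P
      push_neg at hcase
      obtain ⟨hr1, hr2⟩ := hcase
      have G_blins : ∀ E ∈ R'.powerset, (blocksS P (insert r E) ↔ blocksS P E) := by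
        intro E hE
        constructor
        · intro h i hi
          have h2i := h2 i hi
          have hir : i ≠ r := fun h' => hr1 (h' ▸ hi)
          have hir1 : i - 1 ≠ r := by
            intro h'
            have : i = r + 1 := by omega
            exact hr2 (this ▸ hi)
          rcases h i hi with h' | h'
          · rcases mem_insert.1 h' with h'' | h''
            · exact absurd h'' hir1
            · exact Or.inl h''
          · rcases mem_insert.1 h' with h'' | h''
            · exact absurd h'' hir
            · exact Or.inr h''
        · intro h i hi
          rcases h i hi with h' | h'
          · exact Or.inl (mem_insert_of_mem h')
          · exact Or.inr (mem_insert_of_mem h')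
      have G_flip : flipP P (insert r R') ↔ flipP P R' := by
        constructor
        · intro h i hi
          have h2i := h2 i hi
          have hir : i ≠ r := fun h' => hr1 (h' ▸ hi)
          have hir1 : i - 1 ≠ r := by
            intro h'
            have : i = r + 1 := by omega
            exact hr2 (this ▸ hi)
          obtain ⟨ha, hb⟩ := h i hi
          constructor
          · rcases ha with h' | h'
            · rcases mem_insert.1 h' with h'' | h''
              · exact absurd h'' hir1
              · exact Or.inl h''
            · rcases mem_insert.1 h' with h'' | h''
              · exact absurd h'' hir
              · exact Or.inr h''
          · rcases hb with h' | h'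
            · exact Or.inl (fun hm => h' (mem_insert_of_mem hm))
            · exact Or.inr (fun hm => h' (mem_insert_of_mem hm))
        · intro h i hi
          have h2i := h2 i hi
          have hir : i ≠ r := fun h' => hr1 (h' ▸ hi)
          have hir1 : i - 1 ≠ r := by
            intro h'
            have : i = r + 1 := by omega
            exact hr2 (this ▸ hi)
          obtain ⟨ha, hb⟩ := h i hi
          constructor
          · rcases ha with h' | h'
            · exact Or.inl (mem_insert_of_mem h')
            · exact Or.inr (mem_insert_of_mem h')
          · rcases hb with h' | h'
            · refine Or.inl (fun hm => ?_)
              rcases mem_insert.1 hm with h'' | h''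
              · exact hir1 h''
              · exact h' h''
            · refine Or.inr (fun hm => ?_)
              rcases mem_insert.1 hm with h'' | h''
              · exact hir h''
              · exact h' h''
      have hcomb : ∀ E ∈ R'.powerset,
          (-1:ℤ)^((insert r R' \ E).card) * 2^(E.card+1) * (if blocksS P E then 1 else 0)
          + (-1:ℤ)^((insert r R' \ insert r E).card) * 2^((insert r E).card+1) *
              (if blocksS P (insert r E) then 1 else 0)
          = (-1:ℤ)^((R' \ E).card) * 2^(E.card+1) * (if blocksS P E then 1 else 0) := by
        intro E hE
        rw [c1 E hE, c2 E hE, c3 E hE, if_congr (G_blins E hE) rfl rfl]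
        rw [pow_succ, pow_succ]
        ring
      rw [← Finset.sum_add_distrib, Finset.sum_congr rfl hcomb, ih P h2 hs,
        if_congr G_flip rfl rfl]

end S15

namespace S15
open Finset

/-- interval inclusion-exclusion: `∑_{E ⊆ R} (-1)^{|R\E|} [D ⊆ E] = [D = R]` -/
lemma mobius_subset (D R : Finset ℕ) :
    ∑ E ∈ R.powerset, (-1:ℤ)^((R\E).card) * (if D ⊆ E then 1 else 0)
      = if D = R then 1 else 0 := by
  classical
  by_cases hD : D ⊆ R
  · have h1 : ∑ E ∈ R.powerset, (-1:ℤ)^((R\E).card) * (if D ⊆ E then 1 else 0)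
        = ∑ E ∈ R.powerset.filter (fun E => D ⊆ E), (-1:ℤ)^((R\E).card) := by
      rw [Finset.sum_filter]
      apply Finset.sum_congr rfl
      intro E _
      by_cases h : D ⊆ E
      · rw [if_pos h, if_pos h, mul_one]
      · rw [if_neg h, if_neg h, mul_zero]
    have h2 : ∑ E ∈ R.powerset.filter (fun E => D ⊆ E), (-1:ℤ)^((R\E).card)
        = ∑ F ∈ (R \ D).powerset, (-1:ℤ)^(((R\D) \ F).card) := by
      apply Finset.sum_nbij' (fun E => E \ D) (fun F => D ∪ F)
      · intro E hE
        rw [mem_filter, mem_powerset] at hE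
        rw [mem_powerset]
        exact sdiff_subset_sdiff hE.1 (le_refl _)
      · intro F hF
        rw [mem_powerset] at hF
        rw [mem_filter, mem_powerset]
        refine ⟨union_subset hD (fun x hx => (mem_sdiff.1 (hF hx)).1), subset_union_left⟩
      · intro E hE
        rw [mem_filter, mem_powerset] at hE
        exact union_sdiff_of_subset hE.2
      · intro F hF
        rw [mem_powerset] at hF
        apply union_sdiff_cancel_left
        rw [Finset.disjoint_left]
        intro x hxD hxF
        exact (mem_sdiff.1 (hF hxF)).2 hxD
      · intro E hE
        rw [mem_filter, mem_powerset] at hE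
        congr 2
        ext x
        simp only [mem_sdiff]
        constructor
        · rintro ⟨hxR, hxE⟩
          exact ⟨⟨hxR, fun h => hxE (hE.2 h)⟩, fun h => hxE h.1⟩
        · rintro ⟨⟨hxR, hxD⟩, hx⟩
          refine ⟨hxR, fun h => hx ⟨h, hxD⟩⟩
    have h3 : ∑ F ∈ (R \ D).powerset, (-1:ℤ)^(((R\D) \ F).card)
        = ∑ G ∈ (R \ D).powerset, (-1:ℤ)^(G.card) := by
      apply Finset.sum_nbij' (fun F => (R \ D) \ F) (fun G => (R \ D) \ G)
      · intro F hF
        rw [mem_powerset] at hF ⊢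
        exact sdiff_subset
      · intro G hG
        rw [mem_powerset] at hG ⊢
        exact sdiff_subset
      · intro F hF
        rw [mem_powerset] at hF
        exact Finset.sdiff_sdiff_eq_self hF
      · intro G hG
        rw [mem_powerset] at hG
        exact Finset.sdiff_sdiff_eq_self hG
      · intro F hF
        rfl
    rw [h1, h2, h3, Finset.sum_powerset_neg_one_pow_card]
    by_cases hDR : D = R
    · rw [if_pos (show R \ D = ∅ by rw [hDR]; simp), if_pos hDR]
    · rw [if_neg, if_neg hDR]
      intro h
      rw [sdiff_eq_empty_iff_subset] at h
      exact hDR (le_antisymm hD h)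
  · have hzero : ∀ E ∈ R.powerset, (-1:ℤ)^((R\E).card) * (if D ⊆ E then 1 else 0) = 0 := by
      intro E hE
      rw [mem_powerset] at hE
      rw [if_neg (fun h => hD (h.trans hE)), mul_zero]
    rw [Finset.sum_congr rfl hzero, Finset.sum_const, smul_zero, if_neg]
    intro h
    exact hD (le_of_eq h)

/-- Möbius: alternating sum of `des ⊆ E` counts gives the exact descent count -/
lemma mobius_des (n : ℕ) (R : Finset ℕ) :
    ∑ E ∈ R.powerset, (-1:ℤ)^((R\E).card) *
        ((Finset.univ.filter (fun σ : Equiv.Perm (Fin (n+1)) => desF n σ ⊆ E)).card : ℤ)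
      = ((Finset.univ.filter (fun σ : Equiv.Perm (Fin (n+1)) => desF n σ = R)).card : ℤ) := by
  classical
  have hcard : ∀ E : Finset ℕ,
      ((Finset.univ.filter (fun σ : Equiv.Perm (Fin (n+1)) => desF n σ ⊆ E)).card : ℤ)
        = ∑ σ : Equiv.Perm (Fin (n+1)), (if desF n σ ⊆ E then 1 else 0) := by
    intro E
    rw [Finset.sum_boole]
  have hstep : ∑ E ∈ R.powerset, (-1:ℤ)^((R\E).card) *
      ((Finset.univ.filter (fun σ : Equiv.Perm (Fin (n+1)) => desF n σ ⊆ E)).card : ℤ)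
      = ∑ σ : Equiv.Perm (Fin (n+1)), ∑ E ∈ R.powerset,
          (-1:ℤ)^((R\E).card) * (if desF n σ ⊆ E then 1 else 0) := by
    rw [Finset.sum_comm]
    apply Finset.sum_congr rfl
    intro E _
    rw [hcard, Finset.mul_sum]
  rw [hstep]
  have hinner : ∀ σ : Equiv.Perm (Fin (n+1)),
      ∑ E ∈ R.powerset, (-1:ℤ)^((R\E).card) * (if desF n σ ⊆ E then 1 else 0)
        = if desF n σ = R then 1 else 0 := fun σ => mobius_subset (desF n σ) R
  rw [Finset.sum_congr rfl (fun σ _ => hinner σ), Finset.sum_boole]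

end S15

namespace S15
open Finset

lemma peakSet_two_le {n : ℕ} (π : Equiv.Perm (Fin (n+1))) :
    ∀ i ∈ peakSet n π, 2 ≤ i := by
  intro i hi
  have := peakSet_subset π hi
  rw [mem_Icc] at this
  omega

lemma peakSet_sparse {n : ℕ} (π : Equiv.Perm (Fin (n+1))) :
    ∀ i ∈ peakSet n π, i - 1 ∉ peakSet n π := by
  intro i hi hbad
  rw [peakSet_eq_Lam_desF] at hi hbad
  unfold Lam at hi hbad
  rw [mem_filter] at hi hbad
  exact hi.2.2 hbad.1

lemma keyR (n : ℕ) (R : Finset ℕ) (hR : R ⊆ Icc 1 n) :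
    ∑ π : Equiv.Perm (Fin (n+1)),
        (2:ℤ)^((peakSet n π).card + 1) * (if flipP (peakSet n π) R then 1 else 0)
      = 2^(n+1) *
        ((Finset.univ.filter (fun σ : Equiv.Perm (Fin (n+1)) => desF n σ = R)).card : ℤ) := by
  classical
  have hper : ∀ π : Equiv.Perm (Fin (n+1)),
      (2:ℤ)^((peakSet n π).card + 1) * (if flipP (peakSet n π) R then 1 else 0)
      = ∑ E ∈ R.powerset,
          (-1:ℤ)^((R\E).card) * 2^(E.card+1) * (if blocksS (peakSet n π) E then 1 else 0) :=
    fun π => (B_identity R (peakSet n π) (peakSet_two_le π) (peakSet_sparse π)).symm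
  rw [Finset.sum_congr rfl (fun π _ => hper π), Finset.sum_comm]
  have hinner : ∀ E ∈ R.powerset,
      ∑ π : Equiv.Perm (Fin (n+1)),
        (-1:ℤ)^((R\E).card) * 2^(E.card+1) * (if blocksS (peakSet n π) E then 1 else 0)
      = (-1:ℤ)^((R\E).card) * (2^(n+1) *
          ((Finset.univ.filter (fun σ : Equiv.Perm (Fin (n+1)) => desF n σ ⊆ E)).card : ℤ)) := by
    intro E hE
    rw [mem_powerset] at hE
    have hEsub : E ⊆ Icc 1 n := hE.trans hR
    have h1 : ∑ π : Equiv.Perm (Fin (n+1)),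
        (-1:ℤ)^((R\E).card) * 2^(E.card+1) * (if blocksS (peakSet n π) E then 1 else 0)
        = (-1:ℤ)^((R\E).card) * 2^(E.card+1) *
          ((Finset.univ.filter
            (fun π : Equiv.Perm (Fin (n+1)) => blocksS (peakSet n π) E)).card : ℤ) := by
      rw [← Finset.sum_boole, Finset.mul_sum]
    rw [h1]
    have h2 : ((2:ℤ)^(E.card+1)) *
        ((Finset.univ.filter
          (fun π : Equiv.Perm (Fin (n+1)) => blocksS (peakSet n π) E)).card : ℤ)
        = 2^(n+1) *
          ((Finset.univ.filter (fun σ : Equiv.Perm (Fin (n+1)) => desF n σ ⊆ E)).card : ℤ) := by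
      have := Akey n E hEsub
      exact_mod_cast congrArg (Nat.cast : ℕ → ℤ) this
    rw [mul_assoc, h2]
  rw [Finset.sum_congr rfl hinner]
  have h3 : ∑ E ∈ R.powerset, (-1:ℤ)^((R\E).card) * (2^(n+1) *
      ((Finset.univ.filter (fun σ : Equiv.Perm (Fin (n+1)) => desF n σ ⊆ E)).card : ℤ))
      = 2^(n+1) * ∑ E ∈ R.powerset, (-1:ℤ)^((R\E).card) *
        ((Finset.univ.filter (fun σ : Equiv.Perm (Fin (n+1)) => desF n σ ⊆ E)).card : ℤ) := by
    rw [Finset.mul_sum]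
    apply Finset.sum_congr rfl
    intro E _
    ring
  rw [h3, mobius_des n R]

end S15

namespace S15
open Finset

lemma flip_iff (n : ℕ) (π : Equiv.Perm (Fin (n+1))) (R : Finset ℕ) :
    (blocksS (peakSet n π) R ∧ blocksS (peakSet n π) (Icc 1 n \ R)) ↔
      flipP (peakSet n π) R := by
  constructor
  · rintro ⟨h1, h2⟩ i hi
    refine ⟨h1 i hi, ?_⟩
    rcases h2 i hi with h' | h'
    · exact Or.inl (mem_sdiff.1 h').2
    · exact Or.inr (mem_sdiff.1 h').2
  · intro h
    refine ⟨fun i hi => (h i hi).1, fun i hi => ?_⟩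
    have hIcc := peakSet_subset π hi
    rw [mem_Icc] at hIcc
    rcases (h i hi).2 with h' | h'
    · exact Or.inl (mem_sdiff.2 ⟨by rw [mem_Icc]; omega, h'⟩)
    · exact Or.inr (mem_sdiff.2 ⟨by rw [mem_Icc]; omega, h'⟩)

theorem stmt_15' (n : ℕ) (T : Finset ℕ) (hT : LeftSparse n T) :
    ∑ S ∈ (Finset.Icc 1 n).powerset.filter (LeftSparse n),
        2 ^ (S.card + 1) * eta n T S * pCount n S
      = 2 ^ (n + 1) * pCount n T := by
  classical
  have hmaps : ∀ π : Equiv.Perm (Fin (n+1)),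
      peakSet n π ∈ (Icc 1 n).powerset.filter (LeftSparse n) := by
    intro π
    rw [mem_filter, mem_powerset]
    have hLS : LeftSparse n (peakSet n π) := by
      rw [peakSet_eq_Lam_desF]
      exact leftSparse_Lam (desF_subset π)
    exact ⟨hLS.1, hLS⟩
  -- Step 1: regroup the sum over left sparse sets as a sum over permutations
  have hF1 : ∑ S ∈ (Icc 1 n).powerset.filter (LeftSparse n),
        2^(S.card+1) * eta n T S * pCount n S
      = ∑ π : Equiv.Perm (Fin (n+1)), 2^((peakSet n π).card + 1) * eta n T (peakSet n π) := by
    rw [← Finset.sum_fiberwise_of_maps_to (fun π _ => hmaps π)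
      (fun π => 2^((peakSet n π).card + 1) * eta n T (peakSet n π))]
    apply Finset.sum_congr rfl
    intro S hS
    unfold pCount
    rw [Finset.sum_congr rfl (fun π hπ => by rw [(mem_filter.1 hπ).2] :
      ∀ π ∈ Finset.univ.filter (fun π : Equiv.Perm (Fin (n+1)) => peakSet n π = S),
        2^((peakSet n π).card + 1) * eta n T (peakSet n π) = 2^(S.card+1) * eta n T S)]
    rw [Finset.sum_const, smul_eq_mul, mul_comm]
  -- Step 2: unfold eta as a sum over R
  have hF2 : ∀ P : Finset ℕ, eta n T P
      = ∑ R ∈ (Icc 1 n).powerset.filter (fun R => Lam R = T),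
          if blocksS P R ∧ blocksS P (Icc 1 n \ R) then 1 else 0 := by
    intro P
    unfold eta
    have heq : (Icc 1 n).powerset.filter
        (fun R => blocksS P R ∧ blocksS P (Icc 1 n \ R) ∧ Lam R = T)
        = ((Icc 1 n).powerset.filter (fun R => Lam R = T)).filter
            (fun R => blocksS P R ∧ blocksS P (Icc 1 n \ R)) := by
      rw [Finset.filter_filter]
      apply Finset.filter_congr
      intro R _
      tauto
    rw [heq, Finset.card_filter]
  rw [hF1]
  rw [Finset.sum_congr rfl (fun π _ => by rw [hF2 (peakSet n π)] :
    ∀ π ∈ (Finset.univ : Finset (Equiv.Perm (Fin (n+1)))),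
      2^((peakSet n π).card + 1) * eta n T (peakSet n π)
      = 2^((peakSet n π).card + 1) *
          ∑ R ∈ (Icc 1 n).powerset.filter (fun R => Lam R = T),
            if blocksS (peakSet n π) R ∧ blocksS (peakSet n π) (Icc 1 n \ R) then 1 else 0)]
  -- move to ℤ
  apply Nat.cast_injective (R := ℤ)
  push_cast
  -- swap the sums
  rw [Finset.sum_congr rfl (fun π _ => Finset.mul_sum _ _ _ :
    ∀ π ∈ (Finset.univ : Finset (Equiv.Perm (Fin (n+1)))),
      ((2:ℤ)^((peakSet n π).card + 1) *
        ∑ R ∈ (Icc 1 n).powerset.filter (fun R => Lam R = T),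
          (if blocksS (peakSet n π) R ∧ blocksS (peakSet n π) (Icc 1 n \ R) then 1 else 0))
      = ∑ R ∈ (Icc 1 n).powerset.filter (fun R => Lam R = T),
          (2:ℤ)^((peakSet n π).card + 1) *
            (if blocksS (peakSet n π) R ∧ blocksS (peakSet n π) (Icc 1 n \ R) then 1 else 0))]
  rw [Finset.sum_comm]
  -- per R: apply the key identity
  have hperR : ∀ R ∈ (Icc 1 n).powerset.filter (fun R => Lam R = T),
      ∑ π : Equiv.Perm (Fin (n+1)), (2:ℤ)^((peakSet n π).card + 1) *
          (if blocksS (peakSet n π) R ∧ blocksS (peakSet n π) (Icc 1 n \ R) then 1 else 0)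
      = 2^(n+1) *
        ((Finset.univ.filter (fun σ : Equiv.Perm (Fin (n+1)) => desF n σ = R)).card : ℤ) := by
    intro R hR
    rw [mem_filter, mem_powerset] at hR
    rw [← keyR n R hR.1]
    apply Finset.sum_congr rfl
    intro π _
    rw [if_congr (flip_iff n π R) rfl rfl]
  rw [Finset.sum_congr rfl hperR]
  -- collect: ∑_R 2^(n+1) β_R = 2^(n+1) pCount T
  rw [← Finset.mul_sum]
  congr 1
  -- ∑_{R : Lam R = T} β_R = pCount T
  have hfib := Finset.sum_fiberwise_of_maps_to
    (fun (π : Equiv.Perm (Fin (n+1))) (_ : π ∈ Finset.univ) =>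
      (mem_powerset.2 (desF_subset π) : desF n π ∈ (Icc 1 n).powerset))
    (fun π => if Lam (desF n π) = T then (1:ℤ) else 0)
  have hinner : ∀ R ∈ (Icc 1 n).powerset,
      ∑ π ∈ Finset.univ.filter (fun π : Equiv.Perm (Fin (n+1)) => desF n π = R),
          (if Lam (desF n π) = T then (1:ℤ) else 0)
      = (if Lam R = T then 1 else 0) *
          ((Finset.univ.filter (fun σ : Equiv.Perm (Fin (n+1)) => desF n σ = R)).card : ℤ) := by
    intro R _
    rw [Finset.sum_congr rfl (fun π hπ => by rw [(mem_filter.1 hπ).2] :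
      ∀ π ∈ Finset.univ.filter (fun π : Equiv.Perm (Fin (n+1)) => desF n π = R),
        (if Lam (desF n π) = T then (1:ℤ) else 0) = if Lam R = T then 1 else 0)]
    rw [Finset.sum_const, nsmul_eq_mul, mul_comm]
  rw [Finset.sum_congr rfl hinner] at hfib
  have hright : ∑ π : Equiv.Perm (Fin (n+1)), (if Lam (desF n π) = T then (1:ℤ) else 0)
      = (pCount n T : ℤ) := by
    rw [Finset.sum_boole]
    unfold pCount
    congr 2
    apply Finset.filter_congr
    intro π _
    rw [peakSet_eq_Lam_desF]
  rw [hright] at hfib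
  rw [← hfib]
  rw [Finset.sum_filter]
  apply Finset.sum_congr rfl
  intro R _
  by_cases h : Lam R = T
  · rw [if_pos h, if_pos h, one_mul]
  · rw [if_neg h, if_neg h, zero_mul]

end S15

/-- the peak-set distribution `(p_S)` of `S_{n+1}` is an eigenvector
with eigenvalue `2^{n+1}` of the matrix `(2^{|S|+1} η_{T,S})`: for every left
sparse `T ⊆ [n]`, `Σ_{S left sparse} 2^{|S|+1} η_{T,S} p_S = 2^{n+1} p_T`. -/
theorem stmt_15 (n : ℕ) (T : Finset ℕ) (hT : LeftSparse n T) :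
    ∑ S ∈ (Finset.Icc 1 n).powerset.filter (LeftSparse n),
        2 ^ (S.card + 1) * eta n T S * pCount n S
      = 2 ^ (n + 1) * pCount n T := S15.stmt_15' n T hT
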